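/- Let ε ∈ {1, −1}, let ν, β be nonnegative integers, let α, k be positive integers, and let x ∈ ℤ. Suppose U : ℕ → ℤ satisfies the U-recurrence and V : ℕ → ℤ satisfies the V-recurrence, and let B_1, ..., B_k ∈ ℤ. Define P(n) = ∑_{j=1}^{k} B_j·[(n+ν)^j·x^{jα} + U(j)]. Then for every prime p, the function n ↦ ε^n·(n+ν)!·P(n)·x^{αn+β}, with values viewed in ℚ_p, has sum ∑_{j=1}^{k} B_j·V(j−1) in ℚ_p; in particular this sum is the same integer for every prime p. -/
import Mathlib

private def myR (ε y : ℤ) (ν : ℕ) (U : ℕ → ℤ) : ℕ → ℕ → ℤ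
  | 0, _ => 0
  | 1, _ => -ε
  | (m+2), n =>
      y * ((n : ℤ) + ν + 1) * myR ε y ν U (m+1) (n+1) + ε * U (m+1)
        - ∑ ℓ ∈ (Finset.Icc 1 (m+1)).attach,
            (((m+2).choose ℓ.1 : ℕ) : ℤ) * y ^ (m+2-ℓ.1) * myR ε y ν U ℓ.1 n
  termination_by j _ => j
  decreasing_by
  · omega
  · have := (Finset.mem_Icc.mp ℓ.2).2; omega

private lemma myR_one (ε y : ℤ) (ν : ℕ) (U : ℕ → ℤ) (n : ℕ) :
    myR ε y ν U 1 n = -ε := by rw [myR]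

private lemma myR_succ_succ (ε y : ℤ) (ν : ℕ) (U : ℕ → ℤ) (m n : ℕ) :
    myR ε y ν U (m+2) n =
      y * ((n : ℤ) + ν + 1) * myR ε y ν U (m+1) (n+1) + ε * U (m+1)
        - ∑ ℓ ∈ Finset.Icc 1 (m+1),
            (((m+2).choose ℓ : ℕ) : ℤ) * y ^ (m+2-ℓ) * myR ε y ν U ℓ n := by
  rw [myR]
  exact congrArg (fun s => _ - s)
    (Finset.sum_attach (Finset.Icc 1 (m+1))
      (fun ℓ => (((m+2).choose ℓ : ℕ) : ℤ) * y ^ (m+2-ℓ) * myR ε y ν U ℓ n))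

private lemma binom_sum (m : ℕ) (u : ℤ) :
    ∑ ℓ ∈ Finset.Icc 1 (m+1), (((m+2).choose ℓ : ℕ) : ℤ) * u ^ ℓ
      = (u+1)^(m+2) - u^(m+2) - 1 := by
  have hr : Finset.range (m+3) = insert 0 (insert (m+2) (Finset.Icc 1 (m+1))) := by
    ext a; simp only [Finset.mem_range, Finset.mem_insert, Finset.mem_Icc]; omega
  have hbin := add_pow u 1 (m+2)
  simp only [one_pow, mul_one] at hbin
  rw [show m + 2 + 1 = m + 3 from rfl, hr,
    Finset.sum_insert (by simp only [Finset.mem_insert, Finset.mem_Icc]; omega),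
    Finset.sum_insert (by simp only [Finset.mem_Icc]; omega)] at hbin
  simp only [Nat.choose_self, Nat.choose_zero_right, pow_zero, Nat.cast_one, one_mul,
    mul_one] at hbin
  have hc : ∑ ℓ ∈ Finset.Icc 1 (m+1), (((m+2).choose ℓ : ℕ) : ℤ) * u ^ ℓ
      = ∑ ℓ ∈ Finset.Icc 1 (m+1), u ^ ℓ * (((m+2).choose ℓ : ℕ) : ℤ) :=
    Finset.sum_congr rfl (fun _ _ => mul_comm _ _)
  rw [hc]
  linear_combination -hbin

private lemma myR_sub (ε y : ℤ) (ν : ℕ) (U : ℕ → ℤ) (hε2 : ε * ε = 1)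
    (hU1 : U 1 = y - ε)
    (hU' : ∀ m : ℕ, 1 ≤ m →
      ∑ ℓ ∈ Finset.Icc 1 (m+1), (((m+1).choose ℓ : ℕ) : ℤ) * y^(m+1-ℓ) * U ℓ
        = ε * U m + y^(m+1)) :
    ∀ j : ℕ, 1 ≤ j → ∀ n : ℕ,
      myR ε y ν U j n - ε * ((n:ℤ)+ν+1) * y * myR ε y ν U j (n+1)
        = ((n:ℤ)+ν)^j * y^j + U j := by
  intro j
  induction j using Nat.strong_induction_on with
  | _ j ih =>
    rcases j with _ | j
    · intro h; omega
    rcases j with _ | m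
    · intro _ n
      simp only [Nat.zero_add, myR_one]
      linear_combination (((n:ℤ)+ν+1)*y)*hε2 - hU1
    · intro _ n
      simp only [show m+1+1 = m+2 from rfl]
      have h3 := hU' (m+1) (by omega)
      rw [show m+1+1 = m+2 from rfl,
        show Finset.Icc 1 (m+2) = insert (m+2) (Finset.Icc 1 (m+1)) from by
          ext a; simp only [Finset.mem_insert, Finset.mem_Icc]; omega,
        Finset.sum_insert (by simp only [Finset.mem_Icc]; omega)] at h3
      simp only [Nat.choose_self, Nat.sub_self, pow_zero, Nat.cast_one, one_mul,
        mul_one] at h3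
      have key1 : ∑ ℓ ∈ Finset.Icc 1 (m+1), (((m+2).choose ℓ : ℕ) : ℤ) * y^(m+2-ℓ) *
            (myR ε y ν U ℓ n - ε*((n:ℤ)+ν+1)*y*myR ε y ν U ℓ (n+1))
          = (∑ ℓ ∈ Finset.Icc 1 (m+1), (((m+2).choose ℓ : ℕ) : ℤ) * ((n:ℤ)+ν)^ℓ) * y^(m+2)
            + ∑ ℓ ∈ Finset.Icc 1 (m+1), (((m+2).choose ℓ : ℕ) : ℤ) * y^(m+2-ℓ) * U ℓ := by
        rw [Finset.sum_mul, ← Finset.sum_add_distrib]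
        refine Finset.sum_congr rfl ?_
        intro ℓ hℓ
        obtain ⟨h1, h2⟩ := Finset.mem_Icc.mp hℓ
        rw [ih ℓ (by omega) h1 n]
        have hy : y^(m+2-ℓ) * y^ℓ = y^(m+2) := by rw [← pow_add]; congr 1; omega
        linear_combination (((m+2).choose ℓ : ℕ) : ℤ) * ((n:ℤ)+ν)^ℓ * hy
      have key1' : (∑ ℓ ∈ Finset.Icc 1 (m+1),
              (((m+2).choose ℓ : ℕ) : ℤ) * y^(m+2-ℓ) * myR ε y ν U ℓ n)
            - ε*((n:ℤ)+ν+1)*y * (∑ ℓ ∈ Finset.Icc 1 (m+1),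
              (((m+2).choose ℓ : ℕ) : ℤ) * y^(m+2-ℓ) * myR ε y ν U ℓ (n+1))
          = ((((n:ℤ)+ν)+1)^(m+2) - ((n:ℤ)+ν)^(m+2) - 1) * y^(m+2)
            + ∑ ℓ ∈ Finset.Icc 1 (m+1), (((m+2).choose ℓ : ℕ) : ℤ) * y^(m+2-ℓ) * U ℓ := by
        rw [Finset.mul_sum, ← Finset.sum_sub_distrib, ← binom_sum m ((n:ℤ)+ν), ← key1]
        exact Finset.sum_congr rfl (fun _ _ => by ring)
      have h4 := ih (m+1) (by omega) (by omega) (n+1)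
      show myR ε y ν U (m+2) n - ε * ((n:ℤ)+ν+1) * y * myR ε y ν U (m+2) (n+1)
          = ((n:ℤ)+ν)^(m+2) * y^(m+2) + U (m+2)
      rw [myR_succ_succ, myR_succ_succ]
      push_cast at h4 ⊢
      linear_combination y*((n:ℤ)+(ν:ℤ)+1)*h4
        + (-(((n:ℤ)+(ν:ℤ)+1)*y*U (m+1)))*hε2 - key1' - h3

private lemma myR_zero (ε y x : ℤ) (ν β : ℕ) (U V : ℕ → ℤ) (hε2 : ε * ε = 1)
    (hU1 : U 1 = y - ε)
    (hU' : ∀ m : ℕ, 1 ≤ m →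
      ∑ ℓ ∈ Finset.Icc 1 (m+1), (((m+1).choose ℓ : ℕ) : ℤ) * y^(m+1-ℓ) * U ℓ
        = ε * U m + y^(m+1))
    (hV0 : V 0 = -ε * (ν.factorial : ℤ) * x ^ β)
    (hV' : ∀ m : ℕ, 1 ≤ m →
      ∑ ℓ ∈ Finset.Icc 1 (m+1), (((m+1).choose ℓ : ℕ) : ℤ) * y^(m+1-ℓ) * V (ℓ-1)
        = ε * V (m-1) - ε * (ν.factorial : ℤ) * (ν:ℤ)^m * y^m * x^β) :
    ∀ j : ℕ, 1 ≤ j → (ν.factorial : ℤ) * x^β * myR ε y ν U j 0 = V (j-1) := by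
  intro j
  induction j using Nat.strong_induction_on with
  | _ j ih =>
    rcases j with _ | j
    · intro h; omega
    rcases j with _ | m
    · intro _
      simp only [Nat.zero_add, myR_one]
      norm_num
      linear_combination -hV0
    · intro _
      simp only [show m+1+1 = m+2 from rfl]
      have h6 := hV' (m+1) (by omega)
      rw [show m+1+1 = m+2 from rfl,
        show Finset.Icc 1 (m+2) = insert (m+2) (Finset.Icc 1 (m+1)) from by
          ext a; simp only [Finset.mem_insert, Finset.mem_Icc]; omega,
        Finset.sum_insert (by simp only [Finset.mem_Icc]; omega)] at h6
      simp only [Nat.choose_self, Nat.sub_self, pow_zero, Nat.cast_one, one_mul,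
        mul_one, Nat.add_sub_cancel] at h6
      -- h6 : V (m+1) + ∑ ℓ ∈ Icc 1 (m+1), c ℓ * y^(m+2-ℓ) * V (ℓ-1)
      --        = ε * V m - ε * ν! * ν^(m+1) * y^(m+1) * x^β
      have h5 := myR_sub ε y ν U hε2 hU1 hU' (m+1) (by omega) 0
      push_cast at h5
      have IHm := ih (m+1) (by omega) (by omega)
      simp only [Nat.add_sub_cancel] at IHm
      have h7 : (ν.factorial : ℤ) * x^β * (∑ ℓ ∈ Finset.Icc 1 (m+1),
            (((m+2).choose ℓ : ℕ) : ℤ) * y^(m+2-ℓ) * myR ε y ν U ℓ 0)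
          = ∑ ℓ ∈ Finset.Icc 1 (m+1), (((m+2).choose ℓ : ℕ) : ℤ) * y^(m+2-ℓ) * V (ℓ-1) := by
        rw [Finset.mul_sum]
        refine Finset.sum_congr rfl ?_
        intro ℓ hℓ
        obtain ⟨h1, h2⟩ := Finset.mem_Icc.mp hℓ
        rw [← ih ℓ (by omega) h1]
        ring
      show (ν.factorial : ℤ) * x^β * myR ε y ν U (m+2) 0 = V (m+2-1)
      rw [myR_succ_succ]
      simp only [Nat.add_sub_cancel, Nat.cast_zero, zero_add]
      linear_combination (-(ε * ((ν.factorial : ℤ) * x^β)))*h5 + ε*IHm - h7 - h6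
        + (-(((ν.factorial : ℤ) * x^β)*((ν:ℤ)+1)*y*myR ε y ν U (m+1) 1))*hε2

private lemma pow_div_dvd_factorial (p : ℕ) (hp : p.Prime) (m : ℕ) :
    p ^ (m / p) ∣ m.factorial := by
  have hbn : Nat.log p m < max (Nat.log p m + 1) 2 :=
    lt_of_lt_of_le (Nat.lt_succ_self _) (le_max_left _ _)
  rw [Nat.Prime.pow_dvd_factorial_iff hp hbn]
  have h1 : (1:ℕ) ∈ Finset.Ico 1 (max (Nat.log p m + 1) 2) := by
    simp only [Finset.mem_Ico]; omega
  have := Finset.single_le_sum (f := fun i => m / p ^ i) (fun i _ => Nat.zero_le _) h1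
  simpa using this

theorem stmt_12 (ε : ℤ) (hε : ε = 1 ∨ ε = -1) (ν β : ℕ) (α k : ℕ)
    (hα : 0 < α) (hk : 0 < k) (x : ℤ) (U : ℕ → ℤ) (V : ℕ → ℤ) (B : ℕ → ℤ)
    (hU1 : U 1 = x ^ α - ε)
    (hU : ∀ m : ℕ, 1 ≤ m →
      (∑ ℓ ∈ Finset.Icc 1 (m + 1),
          ((m + 1).choose ℓ : ℤ) * x ^ ((m + 1 - ℓ) * α) * U ℓ) -
        ε * U m - x ^ ((m + 1) * α) = 0)
    (hV0 : V 0 = -ε * (ν.factorial : ℤ) * x ^ β)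
    (hV : ∀ m : ℕ, 1 ≤ m →
      (∑ ℓ ∈ Finset.Icc 1 (m + 1),
          ((m + 1).choose ℓ : ℤ) * x ^ ((m + 1 - ℓ) * α) * V (ℓ - 1)) -
        ε * V (m - 1) + ε * (ν.factorial : ℤ) * (ν : ℤ) ^ m * x ^ (m * α + β) = 0)
    (P : ℕ → ℤ)
    (hP : ∀ n : ℕ, P n =
      ∑ j ∈ Finset.Icc 1 k, B j * (((n : ℤ) + ν) ^ j * x ^ (j * α) + U j))
    (p : ℕ) [Fact (Nat.Prime p)] :
    HasSum
      (fun n : ℕ =>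
        ((ε ^ n * ((n + ν).factorial : ℤ) * P n * x ^ (α * n + β) : ℤ) : ℚ_[p]))
      ((∑ j ∈ Finset.Icc 1 k, B j * V (j - 1) : ℤ) : ℚ_[p]) := by
  have hε2 : ε * ε = 1 := by rcases hε with h | h <;> rw [h] <;> ring
  set y : ℤ := x ^ α with hy
  have hU' : ∀ m : ℕ, 1 ≤ m →
      ∑ ℓ ∈ Finset.Icc 1 (m+1), (((m+1).choose ℓ : ℕ) : ℤ) * y^(m+1-ℓ) * U ℓ
        = ε * U m + y^(m+1) := by
    intro m hm
    have h := hU m hm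
    have hs : ∑ ℓ ∈ Finset.Icc 1 (m+1), (((m+1).choose ℓ : ℕ) : ℤ) * y^(m+1-ℓ) * U ℓ
        = ∑ ℓ ∈ Finset.Icc 1 (m+1), (((m+1).choose ℓ : ℕ) : ℤ) * x^((m+1-ℓ)*α) * U ℓ :=
      Finset.sum_congr rfl (fun ℓ _ => by rw [hy, ← pow_mul'])
    have hyU : y^(m+1) = x^((m+1)*α) := by rw [hy, ← pow_mul']
    rw [hs]
    linear_combination h - hyU
  have hV' : ∀ m : ℕ, 1 ≤ m →
      ∑ ℓ ∈ Finset.Icc 1 (m+1), (((m+1).choose ℓ : ℕ) : ℤ) * y^(m+1-ℓ) * V (ℓ-1)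
        = ε * V (m-1) - ε * (ν.factorial : ℤ) * (ν:ℤ)^m * y^m * x^β := by
    intro m hm
    have h := hV m hm
    have hs : ∑ ℓ ∈ Finset.Icc 1 (m+1), (((m+1).choose ℓ : ℕ) : ℤ) * y^(m+1-ℓ) * V (ℓ-1)
        = ∑ ℓ ∈ Finset.Icc 1 (m+1), (((m+1).choose ℓ : ℕ) : ℤ) * x^((m+1-ℓ)*α) * V (ℓ-1) :=
      Finset.sum_congr rfl (fun ℓ _ => by rw [hy, ← pow_mul'])
    have hyx : y^m * x^β = x^(m*α+β) := by rw [hy, ← pow_mul', ← pow_add]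
    rw [hs]
    linear_combination h + ε*(ν.factorial : ℤ)*(ν:ℤ)^m*hyx
  have hU1' : U 1 = y - ε := hU1
  have hsub := myR_sub ε y ν U hε2 hU1' hU'
  have hzero := myR_zero ε y x ν β U V hε2 hU1' hU' hV0 hV'
  -- The telescoping function
  set G : ℕ → ℤ := fun n => ∑ j ∈ Finset.Icc 1 k, B j * myR ε y ν U j n with hG
  set F : ℕ → ℤ := fun n => ε^n * ((n+ν).factorial : ℤ) * y^n * x^β * G n with hF
  have hTF : ∀ n : ℕ,
      ε ^ n * ((n + ν).factorial : ℤ) * P n * x ^ (α * n + β) = F n - F (n+1) := by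
    intro n
    have hGn : G n - ε * ((n:ℤ)+ν+1) * y * G (n+1) = P n := by
      rw [hP n, hG]
      simp only
      rw [Finset.mul_sum, ← Finset.sum_sub_distrib]
      refine Finset.sum_congr rfl ?_
      intro j hj
      obtain ⟨h1, _⟩ := Finset.mem_Icc.mp hj
      have := hsub j h1 n
      rw [show x^(j*α) = y^j from by rw [hy, ← pow_mul']]
      linear_combination B j * this
    have hfact : (((n+1+ν).factorial : ℕ) : ℤ) = ((n:ℤ)+ν+1) * ((n+ν).factorial : ℕ) := by
      rw [show n+1+ν = (n+ν)+1 from by omega, Nat.factorial_succ]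
      push_cast; ring
    have hx : x ^ (α * n + β) = y^n * x^β := by rw [hy, ← pow_mul, ← pow_add]
    rw [hx, hF]
    simp only
    rw [hfact]
    linear_combination ε^n * ((n+ν).factorial : ℤ) * y^n * x^β * hGn.symm
  have hF0 : F 0 = ∑ j ∈ Finset.Icc 1 k, B j * V (j - 1) := by
    rw [hF]
    simp only [pow_zero, one_mul, Nat.zero_add, zero_add]
    rw [hG]
    simp only
    rw [Finset.mul_sum]
    refine Finset.sum_congr rfl ?_
    intro j hj
    obtain ⟨h1, _⟩ := Finset.mem_Icc.mp hj
    rw [← hzero j h1]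
    ring
  -- analysis
  have hp : p.Prime := Fact.out
  set g : ℕ → ℚ_[p] := fun n => ((F n : ℤ) : ℚ_[p]) with hg
  have hnorm : ∀ n : ℕ, ‖g n‖ ≤ (p:ℝ) ^ (-(((n+ν)/p : ℕ)) : ℤ) := by
    intro n
    have hdvd : ((p:ℤ)) ^ ((n+ν)/p) ∣ (((n+ν).factorial : ℕ) : ℤ) := by
      exact_mod_cast Int.natCast_dvd_natCast.mpr (pow_div_dvd_factorial p hp (n+ν))
    have h1 : ‖((((n+ν).factorial : ℕ) : ℤ) : ℚ_[p])‖ ≤ (p:ℝ) ^ (-(((n+ν)/p : ℕ)) : ℤ) :=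
      (Padic.norm_int_le_pow_iff_dvd _ _).mpr hdvd
    have h2 : g n = ((((n+ν).factorial : ℕ) : ℤ) : ℚ_[p]) *
        ((ε^n * y^n * x^β * G n : ℤ) : ℚ_[p]) := by
      rw [hg, hF]; push_cast; ring
    rw [h2, norm_mul]
    calc ‖((((n+ν).factorial : ℕ) : ℤ) : ℚ_[p])‖ * ‖((ε^n * y^n * x^β * G n : ℤ) : ℚ_[p])‖
        ≤ ‖((((n+ν).factorial : ℕ) : ℤ) : ℚ_[p])‖ * 1 := by
          exact mul_le_mul_of_nonneg_left (Padic.norm_int_le_one _) (norm_nonneg _)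
      _ ≤ (p:ℝ) ^ (-(((n+ν)/p : ℕ)) : ℤ) := by rw [mul_one]; exact h1
  have htendg : Filter.Tendsto g Filter.atTop (nhds 0) := by
    apply squeeze_zero_norm hnorm
    have hp1 : (1:ℝ)/p < 1 := by
      rw [div_lt_one (by exact_mod_cast hp.pos)]
      exact_mod_cast hp.one_lt
    have hbase : Filter.Tendsto (fun m : ℕ => ((1:ℝ)/p) ^ m) Filter.atTop (nhds 0) :=
      tendsto_pow_atTop_nhds_zero_of_lt_one (by positivity) hp1
    have hdiv : Filter.Tendsto (fun n : ℕ => (n+ν)/p) Filter.atTop Filter.atTop := by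
      rw [Filter.tendsto_atTop_atTop]
      intro b
      refine ⟨b * p, fun n hn => ?_⟩
      have : b * p ≤ n + ν := le_trans hn (Nat.le_add_right _ _)
      exact (Nat.le_div_iff_mul_le hp.pos).mpr this
    have heqp : ∀ m : ℕ, ((1:ℝ)/p) ^ m = (p:ℝ) ^ (-(m:ℤ)) := by
      intro m
      rw [zpow_neg, zpow_natCast, one_div, inv_pow]
    exact (hbase.comp hdiv).congr (fun n => heqp _)
  -- assemble
  set f : ℕ → ℚ_[p] := fun n =>
    ((ε ^ n * ((n + ν).factorial : ℤ) * P n * x ^ (α * n + β) : ℤ) : ℚ_[p]) with hf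
  have hfg : ∀ n : ℕ, f n = g n - g (n+1) := by
    intro n
    rw [hf, hg]
    simp only
    rw [hTF n]
    push_cast
    ring
  have hsummable : Summable f := by
    apply NonarchimedeanAddGroup.summable_of_tendsto_cofinite_zero
    rw [Nat.cofinite_eq_atTop]
    have : Filter.Tendsto (fun n : ℕ => g n - g (n+1)) Filter.atTop (nhds 0) := by
      have h2 : Filter.Tendsto (fun n : ℕ => g (n+1)) Filter.atTop (nhds 0) :=
        htendg.comp (Filter.tendsto_add_atTop_nat 1)
      simpa using htendg.sub h2
    exact this.congr (fun n => (hfg n).symm)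
  have hhs := hsummable.hasSum
  have hlim1 := hhs.tendsto_sum_nat
  have hlim2 : Filter.Tendsto (fun n : ℕ => ∑ i ∈ Finset.range n, f i)
      Filter.atTop (nhds (g 0)) := by
    have hps : ∀ n : ℕ, ∑ i ∈ Finset.range n, f i = g 0 - g n := by
      intro n
      rw [Finset.sum_congr rfl (fun i _ => hfg i)]
      exact Finset.sum_range_sub' g n
    have : Filter.Tendsto (fun n : ℕ => g 0 - g n) Filter.atTop (nhds (g 0 - 0)) :=
      tendsto_const_nhds.sub htendg
    rw [sub_zero] at this
    exact this.congr (fun n => (hps n).symm)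
  have heq : ∑' n, f n = g 0 := tendsto_nhds_unique hlim1 hlim2
  have : ((∑ j ∈ Finset.Icc 1 k, B j * V (j - 1) : ℤ) : ℚ_[p]) = g 0 := by
    rw [hg]; simp only; rw [hF0]
  rw [this, ← heq]
  exact hhs
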